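/- Let ρ_1, ρ_2 be probability densities on ℝ^d and W_c ∈ L^∞(ℝ^d) symmetric. Define φ_c(x,y) = (W_c∗ρ_2)(x) + (W_c∗ρ_1)(y) − W_c(x−y) − ∫_{ℝ^d} (W_c∗ρ_2) ρ_1 dx. Then φ_c satisfies the cancellations ∫ φ_c(x,y) ρ_1(x) dx = 0 for all y and ∫ φ_c(x,y) ρ_2(y) dy = 0 for all x, and for every 0 < η < 1/(4√2 e ‖W_c‖_∞): sup_{N ≥ 2} ∫_{(ℝ^d)^N × (ℝ^d)^N} exp( (η/N) Σ_{i,j=1}^N φ_c(x_i, y_j) ) ρ_1^{⊗N}(dx) ρ_2^{⊗N}(dy) < ∞. -/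

import Mathlib

open MeasureTheory Real

noncomputable section

/-- `ρ` is a probability density on the measure space `α`. -/
def IsProbDensity {α : Type*} [MeasureSpace α] (ρ : α → ℝ) : Prop :=
  Measurable ρ ∧ (∀ x, 0 ≤ ρ x) ∧ ∫ x, ρ x = 1

/-- The convolution `(W∗ρ)(x) = ∫ W(x−y) ρ(y) dy`. -/
def convW {d : ℕ} (W ρ : (Fin d → ℝ) → ℝ) (x : Fin d → ℝ) : ℝ :=
  ∫ y, W (x - y) * ρ y

/-- The probability measure on `ℝ^d` with density `ρ`. -/
def densMeasure {d : ℕ} (ρ : (Fin d → ℝ) → ℝ) : Measure (Fin d → ℝ) :=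
  volume.withDensity fun x => ENNReal.ofReal (ρ x)

section aux

variable {d : ℕ}

lemma IsProbDensity.integrable {ρ : (Fin d → ℝ) → ℝ} (h : IsProbDensity ρ) :
    Integrable ρ := by
  by_contra hc
  have h1 := h.2.2
  rw [integral_undef hc] at h1
  exact one_ne_zero h1.symm

lemma densMeasure_isProb {ρ : (Fin d → ℝ) → ℝ} (h : IsProbDensity ρ) :
    IsProbabilityMeasure (densMeasure ρ) := by
  constructor
  rw [densMeasure, withDensity_apply _ MeasurableSet.univ, setLIntegral_univ,
    ← ofReal_integral_eq_lintegral_ofReal h.integrable (Filter.Eventually.of_forall h.2.1),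
    h.2.2, ENNReal.ofReal_one]

lemma integral_densMeasure {ρ : (Fin d → ℝ) → ℝ} (h : IsProbDensity ρ)
    (g : (Fin d → ℝ) → ℝ) :
    ∫ u, g u ∂(densMeasure ρ) = ∫ u, ρ u * g u := by
  have hm : Measurable fun x => (ρ x).toNNReal := h.1.real_toNNReal
  have : densMeasure ρ = volume.withDensity fun x => ((ρ x).toNNReal : ENNReal) := rfl
  rw [this, integral_withDensity_eq_integral_smul hm]
  refine integral_congr_ae (Filter.Eventually.of_forall fun x => ?_)
  simp [NNReal.smul_def, Real.coe_toNNReal _ (h.2.1 x)]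

/-- bound for integrals against a probability density -/
lemma abs_integral_mul_density_le {ρ : (Fin d → ℝ) → ℝ} (h : IsProbDensity ρ)
    {g : (Fin d → ℝ) → ℝ} {M : ℝ} (hg : ∀ z, |g z| ≤ M) :
    |∫ z, g z * ρ z| ≤ M := by
  have hint : Integrable (fun z => M * ρ z) := h.integrable.const_mul M
  calc |∫ z, g z * ρ z| ≤ ∫ z, |g z * ρ z| := by
        rw [← Real.norm_eq_abs]
        exact (norm_integral_le_integral_norm _).trans_eq (by simp [Real.norm_eq_abs, abs_mul])
    _ ≤ ∫ z, M * ρ z := by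
        refine integral_mono_of_nonneg (Filter.Eventually.of_forall fun z => abs_nonneg _)
          hint (Filter.Eventually.of_forall fun z => ?_)
        show |g z * ρ z| ≤ M * ρ z
        rw [abs_mul, abs_of_nonneg (h.2.1 z)]
        exact mul_le_mul_of_nonneg_right (hg z) (h.2.1 z)
    _ = M * ∫ z, ρ z := integral_const_mul M _
    _ = M := by rw [h.2.2, mul_one]

end aux

section conv

variable {d : ℕ} {ρ ρ₁ ρ₂ Wc : (Fin d → ℝ) → ℝ} {M : ℝ}

lemma convW_measurable (hW : Measurable Wc) (hρ : Measurable ρ) :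
    Measurable (convW Wc ρ) := by
  have : StronglyMeasurable fun p : (Fin d → ℝ) × (Fin d → ℝ) => Wc (p.1 - p.2) * ρ p.2 :=
    ((hW.comp (measurable_fst.sub measurable_snd)).mul (hρ.comp measurable_snd)).stronglyMeasurable
  exact (StronglyMeasurable.integral_prod_right' (f := fun p : (Fin d → ℝ) × (Fin d → ℝ) =>
    Wc (p.1 - p.2) * ρ p.2) this).measurable

lemma integrable_W_mul (hρ : IsProbDensity ρ) (hM : ∀ z, |Wc z| ≤ M)
    (hW : Measurable Wc) (x : Fin d → ℝ) :
    Integrable (fun y => Wc (x - y) * ρ y) := by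
  refine Integrable.mono' (hρ.integrable.const_mul M)
    ((hW.comp (measurable_const.sub measurable_id)).mul hρ.1).aestronglyMeasurable
    (Filter.Eventually.of_forall fun y => ?_)
  rw [Real.norm_eq_abs, abs_mul, abs_of_nonneg (hρ.2.1 y)]
  exact mul_le_mul_of_nonneg_right (hM _) (hρ.2.1 y)

lemma abs_convW_le (hρ : IsProbDensity ρ) (hM : ∀ z, |Wc z| ≤ M) (x : Fin d → ℝ) :
    |convW Wc ρ x| ≤ M :=
  abs_integral_mul_density_le hρ (fun z => hM _)

/-- bounded measurable times density is integrable -/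
lemma integrable_bdd_mul_density (hρ : IsProbDensity ρ) {g : (Fin d → ℝ) → ℝ}
    (hg : Measurable g) {C : ℝ} (hC : ∀ z, |g z| ≤ C) :
    Integrable (fun z => g z * ρ z) := by
  refine Integrable.mono' (hρ.integrable.const_mul C) (hg.mul hρ.1).aestronglyMeasurable
    (Filter.Eventually.of_forall fun y => ?_)
  rw [Real.norm_eq_abs, abs_mul, abs_of_nonneg (hρ.2.1 y)]
  exact mul_le_mul_of_nonneg_right (hC _) (hρ.2.1 y)

end conv

section cancel

variable {d : ℕ} {ρ₁ ρ₂ Wc : (Fin d → ℝ) → ℝ} {M : ℝ}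

lemma cancel_x (hρ₁ : IsProbDensity ρ₁) (hρ₂ : IsProbDensity ρ₂) (hWc : Measurable Wc)
    (hM : ∀ z, |Wc z| ≤ M) (hWcsymm : ∀ z, Wc (-z) = Wc z) (y : Fin d → ℝ) :
    ∫ x, (convW Wc ρ₂ x + convW Wc ρ₁ y - Wc (x - y) -
      (∫ z, convW Wc ρ₂ z * ρ₁ z)) * ρ₁ x = 0 := by
  set C := ∫ z, convW Wc ρ₂ z * ρ₁ z with hC
  have e1 : Integrable (fun x => convW Wc ρ₂ x * ρ₁ x) :=
    integrable_bdd_mul_density hρ₁ (convW_measurable hWc hρ₂.1) (fun z => abs_convW_le hρ₂ hM z)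
  have e2 : Integrable (fun x => convW Wc ρ₁ y * ρ₁ x) := hρ₁.integrable.const_mul _
  have e3 : Integrable (fun x => Wc (x - y) * ρ₁ x) :=
    integrable_bdd_mul_density hρ₁ (hWc.comp (measurable_id.sub measurable_const)) (fun z => hM _)
  have e4 : Integrable (fun x => C * ρ₁ x) := hρ₁.integrable.const_mul _
  have hrw : (fun x => (convW Wc ρ₂ x + convW Wc ρ₁ y - Wc (x - y) - C) * ρ₁ x)
      = fun x => (convW Wc ρ₂ x * ρ₁ x + convW Wc ρ₁ y * ρ₁ x)
        - (Wc (x - y) * ρ₁ x + C * ρ₁ x) := by funext x; ring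
  have e12 : Integrable (fun x => convW Wc ρ₂ x * ρ₁ x + convW Wc ρ₁ y * ρ₁ x) := e1.add e2
  have e34 : Integrable (fun x => Wc (x - y) * ρ₁ x + C * ρ₁ x) := e3.add e4
  rw [hrw, integral_sub e12 e34, integral_add e1 e2, integral_add e3 e4]
  have h3 : ∫ x, Wc (x - y) * ρ₁ x = convW Wc ρ₁ y := by
    rw [convW]; congr 1; funext x; rw [← hWcsymm (y - x), neg_sub]
  rw [integral_const_mul, integral_const_mul, hρ₁.2.2, h3, ← hC]
  ring

lemma swap_C (hρ₁ : IsProbDensity ρ₁) (hρ₂ : IsProbDensity ρ₂) (hWc : Measurable Wc)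
    (hM : ∀ z, |Wc z| ≤ M) (hWcsymm : ∀ z, Wc (-z) = Wc z) :
    ∫ y, convW Wc ρ₁ y * ρ₂ y = ∫ z, convW Wc ρ₂ z * ρ₁ z := by
  have hint : Integrable (Function.uncurry fun y z => Wc (y - z) * ρ₁ z * ρ₂ y)
      (volume.prod volume) := by
    refine Integrable.mono' ((hρ₂.integrable.mul_prod hρ₁.integrable).const_mul M)
      ?_ (Filter.Eventually.of_forall fun p => ?_)
    · exact (((hWc.comp (measurable_fst.sub measurable_snd)).mul
        (hρ₁.1.comp measurable_snd)).mul (hρ₂.1.comp measurable_fst)).aestronglyMeasurable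
    · show ‖Wc (p.1 - p.2) * ρ₁ p.2 * ρ₂ p.1‖ ≤ M * (ρ₂ p.1 * ρ₁ p.2)
      rw [Real.norm_eq_abs, abs_mul, abs_mul, abs_of_nonneg (hρ₁.2.1 _),
        abs_of_nonneg (hρ₂.2.1 _)]
      calc |Wc (p.1 - p.2)| * ρ₁ p.2 * ρ₂ p.1 ≤ M * ρ₁ p.2 * ρ₂ p.1 :=
            mul_le_mul_of_nonneg_right
              (mul_le_mul_of_nonneg_right (hM _) (hρ₁.2.1 p.2)) (hρ₂.2.1 p.1)
        _ = M * (ρ₂ p.1 * ρ₁ p.2) := by ring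
  calc ∫ y, convW Wc ρ₁ y * ρ₂ y = ∫ y, ∫ z, Wc (y - z) * ρ₁ z * ρ₂ y := by
        congr 1; funext y; rw [convW, ← integral_mul_const]
    _ = ∫ z, ∫ y, Wc (y - z) * ρ₁ z * ρ₂ y := integral_integral_swap hint
    _ = ∫ z, convW Wc ρ₂ z * ρ₁ z := by
        congr 1; funext z
        have : (fun y => Wc (y - z) * ρ₁ z * ρ₂ y) = fun y => ρ₁ z * (Wc (z - y) * ρ₂ y) := by
          funext y; rw [← hWcsymm (z - y), neg_sub]; ring
        rw [this, integral_const_mul, convW]; ring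

lemma cancel_y (hρ₁ : IsProbDensity ρ₁) (hρ₂ : IsProbDensity ρ₂) (hWc : Measurable Wc)
    (hM : ∀ z, |Wc z| ≤ M) (hWcsymm : ∀ z, Wc (-z) = Wc z) (x : Fin d → ℝ) :
    ∫ y, (convW Wc ρ₂ x + convW Wc ρ₁ y - Wc (x - y) -
      (∫ z, convW Wc ρ₂ z * ρ₁ z)) * ρ₂ y = 0 := by
  set C := ∫ z, convW Wc ρ₂ z * ρ₁ z with hC
  have e1 : Integrable (fun y => convW Wc ρ₂ x * ρ₂ y) := hρ₂.integrable.const_mul _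
  have e2 : Integrable (fun y => convW Wc ρ₁ y * ρ₂ y) :=
    integrable_bdd_mul_density hρ₂ (convW_measurable hWc hρ₁.1) (fun z => abs_convW_le hρ₁ hM z)
  have e3 : Integrable (fun y => Wc (x - y) * ρ₂ y) := integrable_W_mul hρ₂ hM hWc x
  have e4 : Integrable (fun y => C * ρ₂ y) := hρ₂.integrable.const_mul _
  have hrw : (fun y => (convW Wc ρ₂ x + convW Wc ρ₁ y - Wc (x - y) - C) * ρ₂ y)
      = fun y => (convW Wc ρ₂ x * ρ₂ y + convW Wc ρ₁ y * ρ₂ y)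
        - (Wc (x - y) * ρ₂ y + C * ρ₂ y) := by funext y; ring
  have e12 : Integrable (fun y => convW Wc ρ₂ x * ρ₂ y + convW Wc ρ₁ y * ρ₂ y) := e1.add e2
  have e34 : Integrable (fun y => Wc (x - y) * ρ₂ y + C * ρ₂ y) := e3.add e4
  rw [hrw, integral_sub e12 e34, integral_add e1 e2, integral_add e3 e4]
  have h2 : ∫ y, convW Wc ρ₁ y * ρ₂ y = C := swap_C hρ₁ hρ₂ hWc hM hWcsymm
  have h3 : ∫ y, Wc (x - y) * ρ₂ y = convW Wc ρ₂ x := rfl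
  rw [integral_const_mul, integral_const_mul, hρ₂.2.2, h2, h3]
  ring

end cancel

section counting

open Finset

lemma image_card_le_half {N k : ℕ} {f : Fin k → Fin N}
    (hf : ∀ a, ((Finset.univ : Finset (Fin k)).filter fun l => f l = a).card ≠ 1) :
    (Finset.image f Finset.univ).card ≤ k / 2 := by
  have hk : k = ∑ a ∈ Finset.image f Finset.univ,
      ((Finset.univ : Finset (Fin k)).filter fun l => f l = a).card := by
    have := Finset.card_eq_sum_card_fiberwise
      (fun l (_ : l ∈ (Finset.univ : Finset (Fin k))) => Finset.mem_image_of_mem f (mem_univ l))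
    simpa using this
  have h2 : ∀ a ∈ Finset.image f Finset.univ,
      2 ≤ ((Finset.univ : Finset (Fin k)).filter fun l => f l = a).card := by
    intro a ha
    obtain ⟨l, _, hl⟩ := Finset.mem_image.mp ha
    have hpos : 0 < ((Finset.univ : Finset (Fin k)).filter fun l => f l = a).card :=
      Finset.card_pos.mpr ⟨l, Finset.mem_filter.mpr ⟨mem_univ l, hl⟩⟩
    have hne := hf a
    omega
  have hmul : (Finset.image f Finset.univ).card * 2 ≤ k := by
    calc (Finset.image f Finset.univ).card * 2
        = ∑ _a ∈ Finset.image f Finset.univ, 2 := by rw [Finset.sum_const, smul_eq_mul]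
      _ ≤ ∑ a ∈ Finset.image f Finset.univ,
          ((Finset.univ : Finset (Fin k)).filter fun l => f l = a).card :=
          Finset.sum_le_sum h2
      _ = k := hk.symm
  exact (Nat.le_div_iff_mul_le (by norm_num)).mpr hmul

lemma count_good (N k : ℕ) :
    ((Finset.univ : Finset (Fin k → Fin N)).filter fun f =>
      ∀ a, ((Finset.univ : Finset (Fin k)).filter fun l => f l = a).card ≠ 1).card
    ≤ ∑ p ∈ Finset.range (k / 2 + 1), N.choose p * p ^ k := by
  classical
  set T := (Finset.univ : Finset (Fin k → Fin N)).filter fun f =>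
      ∀ a, ((Finset.univ : Finset (Fin k)).filter fun l => f l = a).card ≠ 1 with hT
  set 𝒮 := ((Finset.univ : Finset (Fin N)).powerset.filter fun S => S.card ≤ k / 2) with hS
  have hmaps : ∀ f ∈ T, Finset.image f Finset.univ ∈ 𝒮 := by
    intro f hf
    rw [hS, Finset.mem_filter, Finset.mem_powerset]
    exact ⟨Finset.subset_univ _, image_card_le_half ((Finset.mem_filter.mp hf).2)⟩
  have hcard : T.card = ∑ S ∈ 𝒮, (T.filter fun f => Finset.image f Finset.univ = S).card :=
    Finset.card_eq_sum_card_fiberwise hmaps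
  have hfiber : ∀ S ∈ 𝒮, (T.filter fun f => Finset.image f Finset.univ = S).card ≤ S.card ^ k := by
    intro S _
    have hsub : (T.filter fun f => Finset.image f Finset.univ = S)
        ⊆ Fintype.piFinset (fun _ : Fin k => S) := by
      intro g hg
      rw [Fintype.mem_piFinset]
      intro l
      have him := (Finset.mem_filter.mp hg).2
      rw [← him]
      exact Finset.mem_image_of_mem g (mem_univ l)
    calc (T.filter fun f => Finset.image f Finset.univ = S).card
        ≤ (Fintype.piFinset (fun _ : Fin k => S)).card := Finset.card_le_card hsub
      _ = S.card ^ k := by rw [Fintype.card_piFinset]; simp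
  have step1 : T.card ≤ ∑ S ∈ 𝒮, S.card ^ k := by
    rw [hcard]; exact Finset.sum_le_sum hfiber
  have step2 : ∑ S ∈ 𝒮, S.card ^ k
      = ∑ p ∈ Finset.range (k / 2 + 1), ∑ S ∈ 𝒮.filter fun S => S.card = p, S.card ^ k := by
    refine (Finset.sum_fiberwise_of_maps_to ?_ _).symm
    intro S hSmem
    rw [Finset.mem_range]
    have := (Finset.mem_filter.mp hSmem).2
    omega
  have step3 : ∀ p ∈ Finset.range (k / 2 + 1),
      ∑ S ∈ 𝒮.filter (fun S => S.card = p), S.card ^ k ≤ N.choose p * p ^ k := by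
    intro p _
    have hsub : 𝒮.filter (fun S => S.card = p) ⊆ Finset.powersetCard p Finset.univ := by
      intro S hSmem
      rw [Finset.mem_powersetCard]
      exact ⟨Finset.subset_univ _, (Finset.mem_filter.mp hSmem).2⟩
    calc ∑ S ∈ 𝒮.filter (fun S => S.card = p), S.card ^ k
        = ∑ S ∈ 𝒮.filter (fun S => S.card = p), p ^ k := by
          refine Finset.sum_congr rfl fun S hSmem => ?_
          rw [(Finset.mem_filter.mp hSmem).2]
      _ = (𝒮.filter (fun S => S.card = p)).card * p ^ k := by
          rw [Finset.sum_const, smul_eq_mul]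
      _ ≤ (Finset.powersetCard p (Finset.univ : Finset (Fin N))).card * p ^ k :=
          Nat.mul_le_mul_right _ (Finset.card_le_card hsub)
      _ = N.choose p * p ^ k := by
          rw [Finset.card_powersetCard]; simp
  calc T.card ≤ ∑ S ∈ 𝒮, S.card ^ k := step1
    _ = _ := step2
    _ ≤ _ := Finset.sum_le_sum step3

end counting

section analytic

lemma stirling_aux (n : ℕ) : (n : ℝ) ^ n ≤ Real.exp 1 ^ n * n.factorial := by
  rw [Real.exp_one_pow]
  have h1 : ((n : ℝ)) ^ n / n.factorial ≤ Real.exp n := by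
    calc ((n : ℝ)) ^ n / n.factorial
        ≤ ∑ i ∈ Finset.range (n + 1), (n : ℝ) ^ i / i.factorial := by
          refine Finset.single_le_sum (f := fun i => (n : ℝ) ^ i / i.factorial)
            (fun i _ => by positivity) (Finset.self_mem_range_succ n)
      _ ≤ Real.exp n := Real.sum_le_exp_of_nonneg (Nat.cast_nonneg n) (n + 1)
  have hF : (0:ℝ) < n.factorial := by exact_mod_cast n.factorial_pos
  calc (n : ℝ) ^ n = ((n : ℝ) ^ n / n.factorial) * n.factorial := by field_simp
    _ ≤ Real.exp n * n.factorial := mul_le_mul_of_nonneg_right h1 hF.le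

lemma cterm_sq_le {N k p : ℕ} (hN : 1 ≤ N) (hp : p ≤ k / 2) :
    ((N.choose p * p ^ k : ℕ) : ℝ) ^ 2
      ≤ (N : ℝ) ^ k * ((k : ℝ) / 2) ^ k * Real.exp 1 ^ k := by
  rcases Nat.eq_zero_or_pos p with hp0 | hppos
  · subst hp0
    rcases Nat.eq_zero_or_pos k with hk0 | hkpos
    · subst hk0; norm_num
    · have : (0 : ℕ) ^ k = 0 := Nat.zero_pow (by omega)
      rw [this, Nat.mul_zero]
      push_cast
      norm_num
      positivity
  rcases lt_or_ge N p with hNp | hpN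
  · rw [Nat.choose_eq_zero_of_lt hNp, Nat.zero_mul]
    push_cast
    norm_num
    positivity
  -- main case : 1 ≤ p ≤ N, 2 * p ≤ k
  have h2p : 2 * p ≤ k := by
    have := Nat.div_mul_le_self k 2
    omega
  obtain ⟨q, hq⟩ : ∃ q, k = 2 * p + q := ⟨k - 2 * p, by omega⟩
  set x := (N.choose p : ℝ) with hx
  set P := (p : ℝ) with hPdef
  set NN := (N : ℝ) with hNNdef
  set E := Real.exp 1 with hE
  have hP1 : (1:ℝ) ≤ P := by rw [hPdef]; exact_mod_cast hppos
  have hP0 : (0:ℝ) ≤ P := by linarith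
  have hPN : P ≤ NN := by rw [hPdef, hNNdef]; exact_mod_cast hpN
  have hNN0 : (0:ℝ) ≤ NN := by positivity
  have hE1 : (1:ℝ) ≤ E := Real.one_le_exp (by norm_num)
  have hF : (0:ℝ) < p.factorial := by exact_mod_cast p.factorial_pos
  have hx0 : (0:ℝ) ≤ x := by positivity
  have hchoose : x ≤ NN ^ p / p.factorial := Nat.choose_le_pow_div p N
  have hstir : P ^ p ≤ E ^ p * p.factorial := stirling_aux p
  have key : x * P ^ p ≤ NN ^ p * E ^ p := by
    have h1 : x * p.factorial ≤ NN ^ p := by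
      rw [← le_div_iff₀ hF]; exact hchoose
    calc x * P ^ p ≤ x * (E ^ p * p.factorial) :=
          mul_le_mul_of_nonneg_left hstir hx0
      _ = (x * p.factorial) * E ^ p := by ring
      _ ≤ NN ^ p * E ^ p := mul_le_mul_of_nonneg_right h1 (by positivity)
  have main : ((N.choose p * p ^ k : ℕ) : ℝ) ^ 2 ≤ NN ^ k * P ^ k * E ^ k := by
    push_cast
    rw [hq]
    calc (x * P ^ (2 * p + q)) ^ 2
        = (x * P ^ p) ^ 2 * (P ^ (2 * p + q) * P ^ q) := by ring
      _ ≤ (NN ^ p * E ^ p) ^ 2 * (P ^ (2 * p + q) * NN ^ q) := by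
          refine mul_le_mul (pow_le_pow_left₀ (by positivity) key 2) ?_ (by positivity)
            (by positivity)
          exact mul_le_mul_of_nonneg_left (pow_le_pow_left₀ hP0 hPN q) (by positivity)
      _ = (NN ^ (2 * p) * NN ^ q) * P ^ (2 * p + q) * E ^ (2 * p) := by ring
      _ ≤ (NN ^ (2 * p) * NN ^ q) * P ^ (2 * p + q) * E ^ (2 * p + q) := by
          refine mul_le_mul_of_nonneg_left (pow_le_pow_right₀ hE1 (by omega)) (by positivity)
      _ = NN ^ (2 * p + q) * P ^ (2 * p + q) * E ^ (2 * p + q) := by rw [pow_add NN]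
  refine main.trans ?_
  have hPk2 : P ^ k ≤ ((k : ℝ) / 2) ^ k := by
    refine pow_le_pow_left₀ hP0 ?_ k
    rw [le_div_iff₀ (by norm_num : (0:ℝ) < 2), hPdef]
    exact_mod_cast (by omega : p * 2 ≤ k)
  calc NN ^ k * P ^ k * E ^ k ≤ NN ^ k * ((k : ℝ) / 2) ^ k * E ^ k := by
        refine mul_le_mul_of_nonneg_right (mul_le_mul_of_nonneg_left hPk2 (by positivity))
          (by positivity)
    _ = _ := rfl

end analytic

section analytic2

lemma Asum_sq_le {N k : ℕ} (hN : 1 ≤ N) :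
    ((∑ p ∈ Finset.range (k / 2 + 1), N.choose p * p ^ k : ℕ) : ℝ) ^ 2
      ≤ ((k : ℝ) + 1) ^ 2 * ((N : ℝ) ^ k * ((k : ℝ) / 2) ^ k * Real.exp 1 ^ k) := by
  have hCS : ((∑ p ∈ Finset.range (k / 2 + 1), ((N.choose p * p ^ k : ℕ) : ℝ)) ^ 2)
      ≤ (Finset.range (k / 2 + 1)).card *
        ∑ p ∈ Finset.range (k / 2 + 1), ((N.choose p * p ^ k : ℕ) : ℝ) ^ 2 :=
    sq_sum_le_card_mul_sum_sq
  have hterm : ∑ p ∈ Finset.range (k / 2 + 1), ((N.choose p * p ^ k : ℕ) : ℝ) ^ 2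
      ≤ (k / 2 + 1 : ℕ) * ((N : ℝ) ^ k * ((k : ℝ) / 2) ^ k * Real.exp 1 ^ k) := by
    calc ∑ p ∈ Finset.range (k / 2 + 1), ((N.choose p * p ^ k : ℕ) : ℝ) ^ 2
        ≤ ∑ _p ∈ Finset.range (k / 2 + 1),
            ((N : ℝ) ^ k * ((k : ℝ) / 2) ^ k * Real.exp 1 ^ k) := by
          refine Finset.sum_le_sum fun p hp => ?_
          exact cterm_sq_le hN (by simpa using Nat.lt_succ_iff.mp (Finset.mem_range.mp hp))
      _ = _ := by rw [Finset.sum_const, Finset.card_range, nsmul_eq_mul]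
  have hcast : ((∑ p ∈ Finset.range (k / 2 + 1), N.choose p * p ^ k : ℕ) : ℝ)
      = ∑ p ∈ Finset.range (k / 2 + 1), ((N.choose p * p ^ k : ℕ) : ℝ) := by push_cast; rfl
  have hm1 : ((k / 2 + 1 : ℕ) : ℝ) ≤ (k : ℝ) + 1 := by
    have : k / 2 ≤ k := Nat.div_le_self k 2
    exact_mod_cast Nat.succ_le_succ this
  have hD0 : (0:ℝ) ≤ (N : ℝ) ^ k * ((k : ℝ) / 2) ^ k * Real.exp 1 ^ k := by positivity
  rw [hcast]
  calc (∑ p ∈ Finset.range (k / 2 + 1), ((N.choose p * p ^ k : ℕ) : ℝ)) ^ 2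
      ≤ (Finset.range (k / 2 + 1)).card *
        ∑ p ∈ Finset.range (k / 2 + 1), ((N.choose p * p ^ k : ℕ) : ℝ) ^ 2 := hCS
    _ ≤ ((k / 2 + 1 : ℕ) : ℝ) *
        ((k / 2 + 1 : ℕ) * ((N : ℝ) ^ k * ((k : ℝ) / 2) ^ k * Real.exp 1 ^ k)) := by
        rw [Finset.card_range]
        exact mul_le_mul_of_nonneg_left hterm (by positivity)
    _ ≤ ((k : ℝ) + 1) * (((k : ℝ) + 1) * ((N : ℝ) ^ k * ((k : ℝ) / 2) ^ k * Real.exp 1 ^ k)) := by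
        refine mul_le_mul hm1 (mul_le_mul_of_nonneg_right hm1 hD0) (by positivity) (by positivity)
    _ = _ := by ring

lemma term_bound {N k : ℕ} (hN : 1 ≤ N) {η M A : ℝ} (hη : 0 < η) (hM : 0 ≤ M) (hA : 0 ≤ A)
    (hAle : A ≤ ((∑ p ∈ Finset.range (k / 2 + 1), N.choose p * p ^ k : ℕ) : ℝ)) :
    (η / N) ^ k / k.factorial * (A ^ 2 * (4 * M) ^ k)
      ≤ ((k : ℝ) + 1) ^ 2 * (η * (4 * M) * Real.exp 1 ^ 2 / 2) ^ k := by
  have hN0 : (0:ℝ) < N := by exact_mod_cast hN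
  have hkf : (0:ℝ) < k.factorial := by exact_mod_cast k.factorial_pos
  have hA2 : A ^ 2 ≤ ((k : ℝ) + 1) ^ 2 * ((N : ℝ) ^ k * ((k : ℝ) / 2) ^ k * Real.exp 1 ^ k) :=
    (pow_le_pow_left₀ hA hAle 2).trans (Asum_sq_le hN)
  have hk2 : ((k : ℝ) / 2) ^ k ≤ Real.exp 1 ^ k * k.factorial / 2 ^ k := by
    rw [div_pow]
    exact (div_le_div_iff_of_pos_right (by positivity)).mpr (stirling_aux k)
  have h0 : (0:ℝ) ≤ (η / N) ^ k / k.factorial := by positivity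
  calc (η / N) ^ k / k.factorial * (A ^ 2 * (4 * M) ^ k)
      ≤ (η / N) ^ k / k.factorial *
        ((((k : ℝ) + 1) ^ 2 * ((N : ℝ) ^ k * ((k : ℝ) / 2) ^ k * Real.exp 1 ^ k))
          * (4 * M) ^ k) := by
        refine mul_le_mul_of_nonneg_left (mul_le_mul_of_nonneg_right hA2 (by positivity)) h0
    _ ≤ (η / N) ^ k / k.factorial *
        ((((k : ℝ) + 1) ^ 2 * ((N : ℝ) ^ k * (Real.exp 1 ^ k * k.factorial / 2 ^ k)
          * Real.exp 1 ^ k)) * (4 * M) ^ k) := by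
        refine mul_le_mul_of_nonneg_left (mul_le_mul_of_nonneg_right
          (mul_le_mul_of_nonneg_left
            (mul_le_mul_of_nonneg_right
              (mul_le_mul_of_nonneg_left hk2 (by positivity)) (by positivity))
            (by positivity)) (by positivity)) h0
    _ = ((k : ℝ) + 1) ^ 2 * (η * (4 * M) * Real.exp 1 ^ 2 / 2) ^ k := by
        have hNk : ((N:ℝ)) ^ k ≠ 0 := by positivity
        have hkf' : ((k.factorial : ℝ)) ≠ 0 := hkf.ne'
        have h2k : ((2:ℝ)) ^ k ≠ 0 := by positivity
        generalize Real.exp 1 = E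
        rw [div_pow]
        field_simp
        ring_nf
        rw [show (4:ℝ) ^ k = 2 ^ (k * 2) by rw [pow_mul']; norm_num]

end analytic2

section pi

lemma integral_pi_prod {α : Type*} [MeasurableSpace α] (μ : Measure α) [SigmaFinite μ]
    {n : ℕ} (f : Fin n → α → ℝ) :
    ∫ x : Fin n → α, ∏ i, f i (x i) ∂(Measure.pi fun _ => μ) = ∏ i, ∫ u, f i u ∂μ :=
  MeasureTheory.integral_fintype_prod_eq_prod (𝕜 := ℝ) (E := fun _ => α) f (μ := fun _ => μ)

end pi

section moment

set_option maxHeartbeats 1600000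

open Finset

variable {α β : Type*} [MeasurableSpace α] [MeasurableSpace β]

lemma moment_bound {N k : ℕ} (μ : Measure α) (ν : Measure β)
    [IsProbabilityMeasure μ] [IsProbabilityMeasure ν]
    {φ : α → β → ℝ} {B : ℝ} (hB : 0 ≤ B)
    (hφm : Measurable fun p : α × β => φ p.1 p.2)
    (hφb : ∀ x y, |φ x y| ≤ B)
    (hcμ : ∀ w, ∫ u, φ u w ∂μ = 0)
    (hcν : ∀ v, ∫ w, φ v w ∂ν = 0) :
    |∫ z : (Fin N → α) × (Fin N → β), (∑ i, ∑ j, φ (z.1 i) (z.2 j)) ^ k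
        ∂((Measure.pi fun _ => μ).prod (Measure.pi fun _ => ν))|
      ≤ ((∑ p ∈ Finset.range (k / 2 + 1), N.choose p * p ^ k : ℕ) : ℝ) ^ 2 * B ^ k := by
  classical
  set μN := (Measure.pi fun _ : Fin N => μ) with hμN
  set νN := (Measure.pi fun _ : Fin N => ν) with hνN
  set P := μN.prod νN with hP
  have hPprob : IsProbabilityMeasure P := by infer_instance
  set F : (Fin k → Fin N × Fin N) → ((Fin N → α) × (Fin N → β)) → ℝ :=
    fun σ z => ∏ l, φ (z.1 (σ l).1) (z.2 (σ l).2) with hF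
  -- expansion of the power
  have hexp : ∀ z : (Fin N → α) × (Fin N → β),
      (∑ i, ∑ j, φ (z.1 i) (z.2 j)) ^ k
        = ∑ σ ∈ Fintype.piFinset (fun _ : Fin k => (univ : Finset (Fin N × Fin N))), F σ z := by
    intro z
    simp only [hF]
    have h1 : ∑ i, ∑ j, φ (z.1 i) (z.2 j) = ∑ q : Fin N × Fin N, φ (z.1 q.1) (z.2 q.2) := by
      rw [← Finset.sum_product', Finset.univ_product_univ]
    rw [h1]
    have h2 := Finset.prod_univ_sum (fun _ : Fin k => (univ : Finset (Fin N × Fin N)))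
      (fun _ q => φ (z.1 q.1) (z.2 q.2))
    rw [← h2, Finset.prod_const, Finset.card_univ, Fintype.card_fin]
  have hmeas : ∀ σ : Fin k → Fin N × Fin N, Measurable (F σ) := by
    intro σ
    simp only [hF]
    refine Finset.measurable_prod _ fun l _ => ?_
    have hpair : Measurable fun z : (Fin N → α) × (Fin N → β) =>
        (z.1 (σ l).1, z.2 (σ l).2) :=
      Measurable.prodMk ((measurable_pi_apply ((σ l).1)).comp measurable_fst)
        ((measurable_pi_apply ((σ l).2)).comp measurable_snd)
    exact hφm.comp hpair
  have hbd : ∀ (σ : Fin k → Fin N × Fin N) z, |F σ z| ≤ B ^ k := by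
    intro σ z
    simp only [hF]
    calc |∏ l, φ (z.1 (σ l).1) (z.2 (σ l).2)| = ∏ l, |φ (z.1 (σ l).1) (z.2 (σ l).2)| :=
          Finset.abs_prod _ _
      _ ≤ ∏ _l : Fin k, B := Finset.prod_le_prod (fun l _ => abs_nonneg _) (fun l _ => hφb _ _)
      _ = B ^ k := by rw [Finset.prod_const, Finset.card_univ, Fintype.card_fin]
  have hint : ∀ σ : Fin k → Fin N × Fin N, Integrable (F σ) P := by
    intro σ
    refine Integrable.mono' (integrable_const (B ^ k)) (hmeas σ).aestronglyMeasurable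
      (Filter.Eventually.of_forall fun z => ?_)
    rw [Real.norm_eq_abs]; exact hbd σ z
  -- vanishing when some first coordinate appears exactly once
  have hvan1 : ∀ σ : Fin k → Fin N × Fin N,
      (∃ a, ((univ : Finset (Fin k)).filter fun l => (σ l).1 = a).card = 1) →
      ∫ z, F σ z ∂P = 0 := by
    rintro σ ⟨a, ha⟩
    rw [hP, integral_prod_symm _ (hint σ)]
    have hinner : ∀ y : Fin N → β, ∫ x, F σ (x, y) ∂μN = 0 := by
      intro y
      have hrw : ∀ x : Fin N → α, F σ (x, y)
          = ∏ a' : Fin N, (∏ l ∈ (univ : Finset (Fin k)).filter fun l => (σ l).1 = a',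
              φ (x a') (y (σ l).2)) := by
        intro x
        simp only [hF]
        rw [← Finset.prod_fiberwise (univ : Finset (Fin k)) (fun l => (σ l).1)
          (fun l => φ (x (σ l).1) (y (σ l).2))]
        refine Finset.prod_congr rfl fun a' _ => Finset.prod_congr rfl fun l hl => ?_
        rw [(Finset.mem_filter.mp hl).2]
      calc ∫ x, F σ (x, y) ∂μN
          = ∫ x : Fin N → α, ∏ a' : Fin N,
              (∏ l ∈ (univ : Finset (Fin k)).filter fun l => (σ l).1 = a',
                φ (x a') (y (σ l).2)) ∂μN := by
            exact integral_congr_ae (Filter.Eventually.of_forall hrw)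
        _ = ∏ a' : Fin N, ∫ u, (∏ l ∈ (univ : Finset (Fin k)).filter fun l => (σ l).1 = a',
              φ u (y (σ l).2)) ∂μ :=
            integral_pi_prod μ (fun a' u =>
              ∏ l ∈ (univ : Finset (Fin k)).filter fun l => (σ l).1 = a', φ u (y (σ l).2))
        _ = 0 := by
            refine Finset.prod_eq_zero (Finset.mem_univ a) ?_
            obtain ⟨l₀, hl₀⟩ := Finset.card_eq_one.mp ha
            simp only [hl₀, Finset.prod_singleton]
            exact hcμ _
    rw [integral_congr_ae (Filter.Eventually.of_forall hinner), integral_zero]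
  -- vanishing when some second coordinate appears exactly once
  have hvan2 : ∀ σ : Fin k → Fin N × Fin N,
      (∃ b, ((univ : Finset (Fin k)).filter fun l => (σ l).2 = b).card = 1) →
      ∫ z, F σ z ∂P = 0 := by
    rintro σ ⟨b, hb⟩
    rw [hP, integral_prod _ (hint σ)]
    have hinner : ∀ x : Fin N → α, ∫ y, F σ (x, y) ∂νN = 0 := by
      intro x
      have hrw : ∀ y : Fin N → β, F σ (x, y)
          = ∏ b' : Fin N, (∏ l ∈ (univ : Finset (Fin k)).filter fun l => (σ l).2 = b',
              φ (x (σ l).1) (y b')) := by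
        intro y
        simp only [hF]
        rw [← Finset.prod_fiberwise (univ : Finset (Fin k)) (fun l => (σ l).2)
          (fun l => φ (x (σ l).1) (y (σ l).2))]
        refine Finset.prod_congr rfl fun b' _ => Finset.prod_congr rfl fun l hl => ?_
        rw [(Finset.mem_filter.mp hl).2]
      calc ∫ y, F σ (x, y) ∂νN
          = ∫ y : Fin N → β, ∏ b' : Fin N,
              (∏ l ∈ (univ : Finset (Fin k)).filter fun l => (σ l).2 = b',
                φ (x (σ l).1) (y b')) ∂νN := by
            exact integral_congr_ae (Filter.Eventually.of_forall hrw)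
        _ = ∏ b' : Fin N, ∫ w, (∏ l ∈ (univ : Finset (Fin k)).filter fun l => (σ l).2 = b',
              φ (x (σ l).1) w) ∂ν :=
            integral_pi_prod ν (fun b' w =>
              ∏ l ∈ (univ : Finset (Fin k)).filter fun l => (σ l).2 = b', φ (x (σ l).1) w)
        _ = 0 := by
            refine Finset.prod_eq_zero (Finset.mem_univ b) ?_
            obtain ⟨l₀, hl₀⟩ := Finset.card_eq_one.mp hb
            simp only [hl₀, Finset.prod_singleton]
            exact hcν _
    rw [integral_congr_ae (Filter.Eventually.of_forall hinner), integral_zero]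
  -- uniform bound on each term
  have hJbd : ∀ σ : Fin k → Fin N × Fin N, |∫ z, F σ z ∂P| ≤ B ^ k := by
    intro σ
    have := norm_integral_le_of_norm_le_const (μ := P) (f := F σ) (C := B ^ k)
      (Filter.Eventually.of_forall fun z => by rw [Real.norm_eq_abs]; exact hbd σ z)
    rw [Real.norm_eq_abs] at this
    simpa using this
  -- the good set
  set Good : Finset (Fin k → Fin N × Fin N) :=
    (Fintype.piFinset (fun _ : Fin k => (univ : Finset (Fin N × Fin N)))).filter
      (fun σ => (∀ a, ((univ : Finset (Fin k)).filter fun l => (σ l).1 = a).card ≠ 1)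
        ∧ (∀ b, ((univ : Finset (Fin k)).filter fun l => (σ l).2 = b).card ≠ 1)) with hGood
  have hGoodcard : Good.card
      ≤ (∑ p ∈ Finset.range (k / 2 + 1), N.choose p * p ^ k) ^ 2 := by
    have hinj : Set.InjOn (fun σ : Fin k → Fin N × Fin N =>
        ((fun l => (σ l).1, fun l => (σ l).2) : (Fin k → Fin N) × (Fin k → Fin N)))
        Good := by
      intro σ₁ _ σ₂ _ h
      funext l
      have h1 := congrFun (congrArg Prod.fst h) l
      have h2 := congrFun (congrArg Prod.snd h) l
      exact Prod.ext h1 h2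
    have hmapsto : ∀ σ ∈ Good, ((fun l => (σ l).1, fun l => (σ l).2) :
        (Fin k → Fin N) × (Fin k → Fin N)) ∈
        (((univ : Finset (Fin k → Fin N)).filter fun f =>
            ∀ a, ((univ : Finset (Fin k)).filter fun l => f l = a).card ≠ 1) ×ˢ
         ((univ : Finset (Fin k → Fin N)).filter fun f =>
            ∀ a, ((univ : Finset (Fin k)).filter fun l => f l = a).card ≠ 1)) := by
      intro σ hσ
      rw [Finset.mem_product]
      have hσ2 := (Finset.mem_filter.mp hσ).2
      constructor
      · exact Finset.mem_filter.mpr ⟨Finset.mem_univ _, hσ2.1⟩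
      · exact Finset.mem_filter.mpr ⟨Finset.mem_univ _, hσ2.2⟩
    calc Good.card ≤ _ := Finset.card_le_card_of_injOn _ hmapsto hinj
      _ = ((univ : Finset (Fin k → Fin N)).filter fun f =>
            ∀ a, ((univ : Finset (Fin k)).filter fun l => f l = a).card ≠ 1).card
          * ((univ : Finset (Fin k → Fin N)).filter fun f =>
            ∀ a, ((univ : Finset (Fin k)).filter fun l => f l = a).card ≠ 1).card :=
          Finset.card_product _ _
      _ ≤ (∑ p ∈ Finset.range (k / 2 + 1), N.choose p * p ^ k)
          * (∑ p ∈ Finset.range (k / 2 + 1), N.choose p * p ^ k) :=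
          Nat.mul_le_mul (count_good N k) (count_good N k)
      _ = _ := (sq _).symm
  -- put everything together
  have hIeq : ∫ z, (∑ i, ∑ j, φ (z.1 i) (z.2 j)) ^ k ∂P
      = ∑ σ ∈ Fintype.piFinset (fun _ : Fin k => (univ : Finset (Fin N × Fin N))),
          ∫ z, F σ z ∂P := by
    rw [integral_congr_ae (Filter.Eventually.of_forall hexp)]
    exact integral_finset_sum _ fun σ _ => hint σ
  rw [hIeq]
  have habs : |∑ σ ∈ Fintype.piFinset (fun _ : Fin k => (univ : Finset (Fin N × Fin N))),
      ∫ z, F σ z ∂P| ≤ ∑ σ ∈ Good, |∫ z, F σ z ∂P| := by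
    refine (Finset.abs_sum_le_sum_abs _ _).trans ?_
    rw [← Finset.sum_filter_add_sum_filter_not
      (Fintype.piFinset (fun _ : Fin k => (univ : Finset (Fin N × Fin N))))
      (fun σ => (∀ a, ((univ : Finset (Fin k)).filter fun l => (σ l).1 = a).card ≠ 1)
        ∧ (∀ b, ((univ : Finset (Fin k)).filter fun l => (σ l).2 = b).card ≠ 1))]
    have hbadzero : ∑ σ ∈ (Fintype.piFinset
        (fun _ : Fin k => (univ : Finset (Fin N × Fin N)))).filter
        (fun σ => ¬((∀ a, ((univ : Finset (Fin k)).filter fun l => (σ l).1 = a).card ≠ 1)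
          ∧ (∀ b, ((univ : Finset (Fin k)).filter fun l => (σ l).2 = b).card ≠ 1))),
        |∫ z, F σ z ∂P| = 0 := by
      refine Finset.sum_eq_zero fun σ hσ => ?_
      have hbad := (Finset.mem_filter.mp hσ).2
      rw [not_and_or] at hbad
      rcases hbad with hbad | hbad
      · push_neg at hbad
        obtain ⟨a, ha⟩ := hbad
        rw [hvan1 σ ⟨a, ha⟩, abs_zero]
      · push_neg at hbad
        obtain ⟨b, hb⟩ := hbad
        rw [hvan2 σ ⟨b, hb⟩, abs_zero]
    rw [hbadzero, add_zero]
  refine habs.trans ?_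
  calc ∑ σ ∈ Good, |∫ z, F σ z ∂P| ≤ ∑ _σ ∈ Good, B ^ k :=
        Finset.sum_le_sum fun σ _ => hJbd σ
    _ = Good.card * B ^ k := by rw [Finset.sum_const, nsmul_eq_mul]
    _ ≤ (((∑ p ∈ Finset.range (k / 2 + 1), N.choose p * p ^ k : ℕ) : ℝ) ^ 2) * B ^ k := by
        refine mul_le_mul_of_nonneg_right ?_ (by positivity)
        exact_mod_cast hGoodcard

end moment

section expbound

open Finset

variable {α β : Type*} [MeasurableSpace α] [MeasurableSpace β]

lemma summable_bound {r : ℝ} (hr0 : 0 ≤ r) (hr1 : r < 1) :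
    Summable (fun k : ℕ => ((k : ℝ) + 1) ^ 2 * r ^ k) := by
  have h2 : Summable (fun k : ℕ => ((k : ℝ)) ^ 2 * r ^ k) :=
    summable_pow_mul_geometric_of_norm_lt_one 2 (by rwa [Real.norm_eq_abs, abs_of_nonneg hr0])
  have h1 : Summable (fun k : ℕ => ((k : ℝ)) ^ 1 * r ^ k) :=
    summable_pow_mul_geometric_of_norm_lt_one 1 (by rwa [Real.norm_eq_abs, abs_of_nonneg hr0])
  have h0 : Summable (fun k : ℕ => r ^ k) :=
    summable_geometric_of_lt_one hr0 hr1
  refine Summable.congr ((h2.add ((h1.mul_left 2).add h0)) : _) fun k => ?_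
  ring

lemma exp_integral_bound {N : ℕ} (hN : 1 ≤ N) (μ : Measure α) (ν : Measure β)
    [IsProbabilityMeasure μ] [IsProbabilityMeasure ν]
    {φ : α → β → ℝ} {M η : ℝ} (hM : 0 ≤ M) (hη : 0 < η)
    (hr1 : η * (4 * M) * Real.exp 1 ^ 2 / 2 < 1)
    (hφm : Measurable fun p : α × β => φ p.1 p.2)
    (hφb : ∀ x y, |φ x y| ≤ 4 * M)
    (hcμ : ∀ w, ∫ u, φ u w ∂μ = 0)
    (hcν : ∀ v, ∫ w, φ v w ∂ν = 0) :
    ∫⁻ z : (Fin N → α) × (Fin N → β),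
        ENNReal.ofReal (Real.exp ((η / N) * ∑ i, ∑ j, φ (z.1 i) (z.2 j)))
        ∂((Measure.pi fun _ => μ).prod (Measure.pi fun _ => ν))
      ≤ ENNReal.ofReal (∑' k : ℕ,
          ((k : ℝ) + 1) ^ 2 * (η * (4 * M) * Real.exp 1 ^ 2 / 2) ^ k) := by
  classical
  set P := ((Measure.pi fun _ : Fin N => μ).prod (Measure.pi fun _ : Fin N => ν)) with hPdef
  have hPprob : IsProbabilityMeasure P := by infer_instance
  set S : ((Fin N → α) × (Fin N → β)) → ℝ := fun z => ∑ i, ∑ j, φ (z.1 i) (z.2 j) with hS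
  set t : ℝ := η / N with ht
  set c : ℝ := (N : ℝ) * ((N : ℝ) * (4 * M)) with hc
  set r : ℝ := η * (4 * M) * Real.exp 1 ^ 2 / 2 with hr
  have hN0 : (0 : ℝ) < N := by exact_mod_cast hN
  have ht0 : 0 ≤ t := by positivity
  have hc0 : 0 ≤ c := by positivity
  have hr0 : 0 ≤ r := by positivity
  have hSm : Measurable S := by
    simp only [hS]
    refine Finset.measurable_sum _ fun i _ => Finset.measurable_sum _ fun j _ => ?_
    exact hφm.comp (Measurable.prodMk ((measurable_pi_apply i).comp measurable_fst)
      ((measurable_pi_apply j).comp measurable_snd))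
  have hSb : ∀ z, |S z| ≤ c := by
    intro z
    simp only [hS]
    calc |∑ i, ∑ j, φ (z.1 i) (z.2 j)| ≤ ∑ i, |∑ j, φ (z.1 i) (z.2 j)| :=
          Finset.abs_sum_le_sum_abs _ _
      _ ≤ ∑ i : Fin N, ∑ j : Fin N, |φ (z.1 i) (z.2 j)| :=
          Finset.sum_le_sum fun i _ => Finset.abs_sum_le_sum_abs _ _
      _ ≤ ∑ _i : Fin N, ∑ _j : Fin N, 4 * M :=
          Finset.sum_le_sum fun i _ => Finset.sum_le_sum fun j _ => hφb _ _
      _ = c := by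
          rw [Finset.sum_const, Finset.sum_const, Finset.card_univ, Fintype.card_fin,
            nsmul_eq_mul, nsmul_eq_mul, hc]
  have hfm : Measurable fun z => Real.exp (t * S z) := (Real.measurable_exp).comp (hSm.const_mul t)
  have hfb : ∀ z, Real.exp (t * S z) ≤ Real.exp (t * c) := by
    intro z
    exact Real.exp_le_exp.mpr (mul_le_mul_of_nonneg_left ((le_abs_self _).trans (hSb z)) ht0)
  have hfint : Integrable (fun z => Real.exp (t * S z)) P := by
    refine Integrable.mono' (integrable_const (Real.exp (t * c))) hfm.aestronglyMeasurable
      (Filter.Eventually.of_forall fun z => ?_)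
    rw [Real.norm_eq_abs, abs_of_pos (Real.exp_pos _)]
    exact hfb z
  -- reduce to a Bochner integral
  have hlin : ∫⁻ z, ENNReal.ofReal (Real.exp (t * S z)) ∂P
      = ENNReal.ofReal (∫ z, Real.exp (t * S z) ∂P) :=
    (ofReal_integral_eq_lintegral_ofReal hfint
      (Filter.Eventually.of_forall fun z => (Real.exp_pos _).le)).symm
  rw [show (fun z : (Fin N → α) × (Fin N → β) =>
      ENNReal.ofReal (Real.exp ((η / N) * ∑ i, ∑ j, φ (z.1 i) (z.2 j))))
    = fun z => ENNReal.ofReal (Real.exp (t * S z)) from rfl] at *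
  rw [hlin]
  refine ENNReal.ofReal_le_ofReal ?_
  -- series expansion
  have hexpser : ∀ x : ℝ, Real.exp x = ∑' k : ℕ, x ^ k / k.factorial := by
    intro x
    rw [Real.exp_eq_exp_ℝ, NormedSpace.exp_eq_tsum_div]
  have hfk_meas : ∀ k : ℕ, AEStronglyMeasurable
      (fun z => (t * S z) ^ k / k.factorial) P := by
    intro k
    exact (((hSm.const_mul t).pow_const k).div_const _).aestronglyMeasurable
  have hfk_bd : ∀ (k : ℕ) z, ‖(t * S z) ^ k / k.factorial‖ ≤ (t * c) ^ k / k.factorial := by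
    intro k z
    rw [Real.norm_eq_abs, abs_div, abs_pow, Nat.abs_cast]
    have habs : |t * S z| ≤ t * c := by
      rw [abs_mul, abs_of_nonneg ht0]
      exact mul_le_mul_of_nonneg_left (hSb z) ht0
    gcongr
  have hfk_lint : ∀ k : ℕ, ∫⁻ z, ‖(t * S z) ^ k / k.factorial‖₊ ∂P
      ≤ ENNReal.ofReal ((t * c) ^ k / k.factorial) := by
    intro k
    calc ∫⁻ z, (‖(t * S z) ^ k / (k.factorial : ℝ)‖₊ : ENNReal) ∂P
        ≤ ∫⁻ _z, ENNReal.ofReal ((t * c) ^ k / k.factorial) ∂P := by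
          refine lintegral_mono fun z => ?_
          rw [← enorm_eq_nnnorm, ← ofReal_norm]
          exact ENNReal.ofReal_le_ofReal (hfk_bd k z)
      _ = ENNReal.ofReal ((t * c) ^ k / k.factorial) := by
          rw [lintegral_const, measure_univ, mul_one]
  have hsum_ne_top : ∑' k : ℕ, ∫⁻ z, ‖(t * S z) ^ k / k.factorial‖₊ ∂P ≠ ⊤ := by
    have h1 : ∑' k : ℕ, ∫⁻ z, ‖(t * S z) ^ k / k.factorial‖₊ ∂P
        ≤ ∑' k : ℕ, ENNReal.ofReal ((t * c) ^ k / k.factorial) :=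
      ENNReal.tsum_le_tsum hfk_lint
    have h2 : ∑' k : ℕ, ENNReal.ofReal ((t * c) ^ k / k.factorial)
        = ENNReal.ofReal (∑' k : ℕ, (t * c) ^ k / k.factorial) :=
      (ENNReal.ofReal_tsum_of_nonneg (fun k => by positivity)
        (NormedSpace.expSeries_div_summable (t * c))).symm
    exact ((h1.trans_eq h2).trans_lt ENNReal.ofReal_lt_top).ne
  have hswap : ∫ z, Real.exp (t * S z) ∂P
      = ∑' k : ℕ, ∫ z, (t * S z) ^ k / k.factorial ∂P := by
    have h1 : ∫ z, Real.exp (t * S z) ∂P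
        = ∫ z, ∑' k : ℕ, (t * S z) ^ k / k.factorial ∂P :=
      integral_congr_ae (Filter.Eventually.of_forall fun z => hexpser (t * S z))
    rw [h1]
    exact integral_tsum hfk_meas hsum_ne_top
  have hIk : ∀ k : ℕ, ∫ z, (t * S z) ^ k / k.factorial ∂P
      = (t ^ k / k.factorial) * ∫ z, (S z) ^ k ∂P := by
    intro k
    rw [show (fun z => (t * S z) ^ k / (k.factorial : ℝ))
      = fun z => (t ^ k / k.factorial) * (S z) ^ k from funext fun z => by
        rw [mul_pow]; ring]
    exact integral_const_mul _ _
  -- per-term bound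
  have hperk : ∀ k : ℕ, |(t ^ k / k.factorial) * ∫ z, (S z) ^ k ∂P|
      ≤ ((k : ℝ) + 1) ^ 2 * r ^ k := by
    intro k
    have hmom := moment_bound (N := N) (k := k) μ ν
      (by positivity : (0:ℝ) ≤ 4 * M) hφm hφb hcμ hcν
    have hmom' : |∫ z, (S z) ^ k ∂P|
        ≤ ((∑ p ∈ Finset.range (k / 2 + 1), N.choose p * p ^ k : ℕ) : ℝ) ^ 2 * (4 * M) ^ k :=
      hmom
    have hA0 : (0:ℝ) ≤ ((∑ p ∈ Finset.range (k / 2 + 1), N.choose p * p ^ k : ℕ) : ℝ) :=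
      Nat.cast_nonneg _
    calc |(t ^ k / k.factorial) * ∫ z, (S z) ^ k ∂P|
        = (t ^ k / k.factorial) * |∫ z, (S z) ^ k ∂P| := by
          rw [abs_mul, abs_of_nonneg (by positivity)]
      _ ≤ (t ^ k / k.factorial) *
          (((∑ p ∈ Finset.range (k / 2 + 1), N.choose p * p ^ k : ℕ) : ℝ) ^ 2 * (4 * M) ^ k) :=
          mul_le_mul_of_nonneg_left hmom' (by positivity)
      _ ≤ ((k : ℝ) + 1) ^ 2 * r ^ k := by
          rw [ht, hr]
          exact term_bound hN hη hM hA0 le_rfl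
  have hsummableB : Summable (fun k : ℕ => ((k : ℝ) + 1) ^ 2 * r ^ k) :=
    summable_bound hr0 hr1
  have hsummableA : Summable (fun k : ℕ => |(t ^ k / k.factorial) * ∫ z, (S z) ^ k ∂P|) :=
    Summable.of_nonneg_of_le (fun k => abs_nonneg _) hperk hsummableB
  calc ∫ z, Real.exp (t * S z) ∂P
      = ∑' k : ℕ, (t ^ k / k.factorial) * ∫ z, (S z) ^ k ∂P := by
        rw [hswap]; exact tsum_congr hIk
    _ ≤ |∑' k : ℕ, (t ^ k / k.factorial) * ∫ z, (S z) ^ k ∂P| := le_abs_self _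
    _ ≤ ∑' k : ℕ, |(t ^ k / k.factorial) * ∫ z, (S z) ^ k ∂P| := by
        have := norm_tsum_le_tsum_norm (f := fun k : ℕ =>
          (t ^ k / k.factorial) * ∫ z, (S z) ^ k ∂P)
          (by simpa only [Real.norm_eq_abs] using hsummableA)
        simpa only [Real.norm_eq_abs] using this
    _ ≤ ∑' k : ℕ, ((k : ℝ) + 1) ^ 2 * r ^ k := Summable.tsum_le_tsum hperk hsummableA hsummableB

end expbound

/-- the cross-interaction function
`φ_c(x,y) = (W_c∗ρ₂)(x) + (W_c∗ρ₁)(y) − W_c(x−y) − ∫(W_c∗ρ₂)ρ₁`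
satisfies the cancellations `∫ φ_c(x,y)ρ₁(x)dx = 0` for all `y` and
`∫ φ_c(x,y)ρ₂(y)dy = 0` for all `x`, and for every `0 < η < 1/(4√2 e ‖W_c‖_∞)`,
`sup_{N≥2} ∫ exp((η/N) Σ_{i,j} φ_c(xᵢ,yⱼ)) dρ₁^{⊗N} dρ₂^{⊗N} < ∞`. -/
theorem cross_term_cancellation_and_exp_bound {d : ℕ} (ρ₁ ρ₂ Wc : (Fin d → ℝ) → ℝ)
    (hρ₁ : IsProbDensity ρ₁) (hρ₂ : IsProbDensity ρ₂)
    (hWc : Measurable Wc) (hWcbdd : ∃ M, ∀ z, |Wc z| ≤ M) (hWcsymm : ∀ z, Wc (-z) = Wc z)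
    (φc : (Fin d → ℝ) → (Fin d → ℝ) → ℝ)
    (hφc : φc = fun x y =>
      convW Wc ρ₂ x + convW Wc ρ₁ y - Wc (x - y) - ∫ z, convW Wc ρ₂ z * ρ₁ z) :
    ((∀ y, ∫ x, φc x y * ρ₁ x = 0) ∧ (∀ x, ∫ y, φc x y * ρ₂ y = 0)) ∧
    (∀ η : ℝ, 0 < η → η * (4 * Real.sqrt 2 * Real.exp 1 * ⨆ z, |Wc z|) < 1 →
      (⨆ (N : ℕ) (_ : 2 ≤ N),
        ∫⁻ z : (Fin N → (Fin d → ℝ)) × (Fin N → (Fin d → ℝ)),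
          ENNReal.ofReal (Real.exp ((η / (N : ℝ)) * ∑ i, ∑ j, φc (z.1 i) (z.2 j)))
        ∂((Measure.pi fun _ : Fin N => densMeasure ρ₁).prod
            (Measure.pi fun _ : Fin N => densMeasure ρ₂))) < ⊤) := by
  -- the supremum bound on |Wc|
  set M := ⨆ z, |Wc z| with hMdef
  obtain ⟨M₀, hM₀⟩ := hWcbdd
  have hbdd : BddAbove (Set.range fun z => |Wc z|) := ⟨M₀, by rintro x ⟨z, rfl⟩; exact hM₀ z⟩
  have hM : ∀ z, |Wc z| ≤ M := fun z => le_ciSup hbdd z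
  have hM0 : 0 ≤ M := (abs_nonneg _).trans (hM 0)
  -- the cancellations
  have hcan1 : ∀ y, ∫ x, φc x y * ρ₁ x = 0 := by
    intro y; rw [hφc]; exact cancel_x hρ₁ hρ₂ hWc hM hWcsymm y
  have hcan2 : ∀ x, ∫ y, φc x y * ρ₂ y = 0 := by
    intro x; rw [hφc]; exact cancel_y hρ₁ hρ₂ hWc hM hWcsymm x
  refine ⟨⟨hcan1, hcan2⟩, ?_⟩
  intro η hη hηlt
  -- probability measures
  haveI hP1 : IsProbabilityMeasure (densMeasure ρ₁) := densMeasure_isProb hρ₁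
  haveI hP2 : IsProbabilityMeasure (densMeasure ρ₂) := densMeasure_isProb hρ₂
  -- bound on φc
  have hφb : ∀ x y, |φc x y| ≤ 4 * M := by
    intro x y
    rw [hφc]
    have h1 := abs_convW_le hρ₂ hM x
    have h2 := abs_convW_le hρ₁ hM y
    have h3 := hM (x - y)
    have h4 : |∫ z, convW Wc ρ₂ z * ρ₁ z| ≤ M :=
      abs_integral_mul_density_le hρ₁ (fun z => abs_convW_le hρ₂ hM z)
    rw [abs_le] at h1 h2 h3 h4 ⊢
    constructor <;> [skip; skip] <;>
      simp only [] <;> [linarith [h1.1, h2.1, h3.2, h4.2]; linarith [h1.2, h2.2, h3.1, h4.1]]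
  -- measurability of φc
  have hφm : Measurable fun p : (Fin d → ℝ) × (Fin d → ℝ) => φc p.1 p.2 := by
    rw [hφc]
    exact ((((convW_measurable hWc hρ₂.1).comp measurable_fst).add
      ((convW_measurable hWc hρ₁.1).comp measurable_snd)).sub
      (hWc.comp (measurable_fst.sub measurable_snd))).sub measurable_const
  -- cancellations for the measures
  have hcμ : ∀ w, ∫ u, φc u w ∂(densMeasure ρ₁) = 0 := by
    intro w
    rw [integral_densMeasure hρ₁]
    rw [show (fun u => ρ₁ u * φc u w) = fun u => φc u w * ρ₁ u from
      funext fun u => mul_comm _ _]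
    exact hcan1 w
  have hcν : ∀ v, ∫ w, φc v w ∂(densMeasure ρ₂) = 0 := by
    intro v
    rw [integral_densMeasure hρ₂]
    rw [show (fun w => ρ₂ w * φc v w) = fun w => φc v w * ρ₂ w from
      funext fun w => mul_comm _ _]
    exact hcan2 v
  -- the small parameter
  have hsqrt : (1.414213 : ℝ) < Real.sqrt 2 := by
    rw [show (1.414213 : ℝ) = Real.sqrt (1.414213 ^ 2) from
      (Real.sqrt_sq (by norm_num)).symm]
    exact Real.sqrt_lt_sqrt (by positivity) (by norm_num)
  have hs0 : (0:ℝ) < Real.sqrt 2 := by linarith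
  have hq : Real.exp 1 / (2 * Real.sqrt 2) < 1 := by
    rw [div_lt_one (by positivity)]
    nlinarith [Real.exp_one_lt_d9]
  have hq0 : 0 ≤ Real.exp 1 / (2 * Real.sqrt 2) := by positivity
  have hX0 : 0 ≤ η * (4 * Real.sqrt 2 * Real.exp 1 * M) :=
    mul_nonneg hη.le (mul_nonneg (by positivity) hM0)
  have hreq : η * (4 * M) * Real.exp 1 ^ 2 / 2
      = (η * (4 * Real.sqrt 2 * Real.exp 1 * M)) * (Real.exp 1 / (2 * Real.sqrt 2)) := by
    have hgen : ∀ E : ℝ, η * (4 * M) * E ^ 2 / 2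
        = (η * (4 * Real.sqrt 2 * E * M)) * (E / (2 * Real.sqrt 2)) := by
      intro E
      field_simp
    exact hgen _
  have hr1 : η * (4 * M) * Real.exp 1 ^ 2 / 2 < 1 := by
    rw [hreq]
    calc (η * (4 * Real.sqrt 2 * Real.exp 1 * M)) * (Real.exp 1 / (2 * Real.sqrt 2))
        ≤ η * (4 * Real.sqrt 2 * Real.exp 1 * M) := mul_le_of_le_one_right hX0 hq.le
      _ < 1 := hηlt
  -- conclude
  have hbound : ∀ (N : ℕ), 1 ≤ N →
      ∫⁻ z : (Fin N → (Fin d → ℝ)) × (Fin N → (Fin d → ℝ)),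
          ENNReal.ofReal (Real.exp ((η / (N : ℝ)) * ∑ i, ∑ j, φc (z.1 i) (z.2 j)))
        ∂((Measure.pi fun _ : Fin N => densMeasure ρ₁).prod
            (Measure.pi fun _ : Fin N => densMeasure ρ₂))
      ≤ ENNReal.ofReal (∑' k : ℕ,
          ((k : ℝ) + 1) ^ 2 * (η * (4 * M) * Real.exp 1 ^ 2 / 2) ^ k) :=
    fun N hN1 => exp_integral_bound hN1 (densMeasure ρ₁) (densMeasure ρ₂)
      hM0 hη hr1 hφm hφb hcμ hcν
  exact lt_of_le_of_lt (iSup_le fun N => iSup_le fun hN2 => hbound N (by omega))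
    ENNReal.ofReal_lt_top
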